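/- Let f be a derivation of N, and let (p, q) be a pair with 1 ≤ p < q ≤ t and (p, q) ∉ {(1, t−1), (1, t), (2, t)}. Then there exists a matrix Y ∈ N^{pq} such that: (a) for every i with 1 ≤ i < p, every A ∈ N^{ip}, and all indices r, s with b r = i and b s = q, one has f(A) r s = −(A·Y) r s; and (b) for every j with q < j ≤ t, every A ∈ N^{qj}, and all indices r, s with b r = p and b s = j, one has f(A) r s = (Y·A) r s. -/

import Mathlib

/-- `A` is a strictly block upper triangular matrix relative to the block function `b`
(index `r` lies in block `b r`): `A r s = 0` whenever `b r ≥ b s`. -/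
def InN {F : Type*} [Field F] {n : ℕ} (b : Fin n → ℕ)
    (A : Matrix (Fin n) (Fin n) F) : Prop :=
  ∀ r s, b s ≤ b r → A r s = 0

/-- `A` lies in the `(i,j)` block `N^{ij}`: `A r s = 0` unless `b r = i` and `b s = j`. -/
def InBlk {F : Type*} [Field F] {n : ℕ} (b : Fin n → ℕ) (i j : ℕ)
    (A : Matrix (Fin n) (Fin n) F) : Prop :=
  ∀ r s, ¬(b r = i ∧ b s = j) → A r s = 0

/-- `f` is a derivation of the Lie algebra `N` of strictly block upper triangular matrices:
it maps `N` into `N` and satisfies `f [X,Y] = [f X, Y] + [X, f Y]` on `N`,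
where `[X,Y] = XY - YX`. -/
def IsDerN {F : Type*} [Field F] {n : ℕ} (b : Fin n → ℕ)
    (f : Matrix (Fin n) (Fin n) F →ₗ[F] Matrix (Fin n) (Fin n) F) : Prop :=
  (∀ A, InN b A → InN b (f A)) ∧
  ∀ X Y, InN b X → InN b Y →
    f (X * Y - Y * X) = (f X * Y - Y * f X) + (X * f Y - f Y * X)

open Matrix Finset

section Aux

variable {F : Type*} [Field F] {n : ℕ} {b : Fin n → ℕ}

lemma inN_of_inBlk {i j : ℕ} (hij : i < j) {A : Matrix (Fin n) (Fin n) F}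
    (hA : InBlk b i j A) : InN b A := by
  intro r s hrs
  apply hA
  rintro ⟨hr, hs⟩
  omega

lemma stdBasis_inBlk {i j : ℕ} {u v : Fin n} (hu : b u = i) (hv : b v = j) :
    InBlk b i j (Matrix.single u v (1:F)) := by
  intro r s h
  apply Matrix.single_apply_of_ne
  rintro ⟨rfl, rfl⟩
  exact h ⟨hu, hv⟩

/-- If the column-block of `A` differs from the row-block of `C`, then `A * C = 0`. -/
lemma blk_mul_blk_eq_zero {i j k l : ℕ} (h : j ≠ k)
    {A C : Matrix (Fin n) (Fin n) F} (hA : InBlk b i j A) (hC : InBlk b k l C) :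
    A * C = 0 := by
  ext x y
  simp only [Matrix.zero_apply, Matrix.mul_apply]
  apply Finset.sum_eq_zero
  intro w _
  by_cases hw : b w = j
  · rw [hC w y (by rintro ⟨h1, _⟩; omega), mul_zero]
  · rw [hA x w (by rintro ⟨_, h2⟩; exact hw h2), zero_mul]

/-- Cross identity: if `A ∈ N^{ip}`, `C ∈ N^{qj}` with `i<p<q<j`, then `[A,C]=0`, so
`(f A * C) r s + (A * f C) r s = 0` at entries with `b r = i`, `b s = j`. -/
lemma cross {f : Matrix (Fin n) (Fin n) F →ₗ[F] Matrix (Fin n) (Fin n) F}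
    (hf : IsDerN b f) {i p q j : ℕ} (hip : i < p) (hpq : p < q) (hqj : q < j)
    {A C : Matrix (Fin n) (Fin n) F} (hA : InBlk b i p A) (hC : InBlk b q j C)
    (r s : Fin n) (hr : b r = i) (hs : b s = j) :
    (f A * C) r s + (A * f C) r s = 0 := by
  have hAC : A * C = 0 := blk_mul_blk_eq_zero (by omega) hA hC
  have hCA : C * A = 0 := blk_mul_blk_eq_zero (by omega) hC hA
  have h0 := hf.2 A C (inN_of_inBlk hip hA) (inN_of_inBlk hqj hC)
  rw [hAC, hCA, sub_zero, map_zero] at h0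
  have h1 := congrFun (congrFun h0.symm r) s
  simp only [Matrix.add_apply, Matrix.sub_apply, Matrix.zero_apply] at h1
  have h2 : (C * f A) r s = 0 := by
    rw [Matrix.mul_apply]
    apply Finset.sum_eq_zero
    intro w _
    rw [hC r w (by rintro ⟨h', _⟩; omega), zero_mul]
  have h3 : (f C * A) r s = 0 := by
    rw [Matrix.mul_apply]
    apply Finset.sum_eq_zero
    intro w _
    rw [hA w s (by rintro ⟨_, h'⟩; omega), mul_zero]
  rw [h2, h3] at h1
  linear_combination h1

/-- Right propagation: `A ∈ N^{qm}`, `B ∈ N^{ml}`, `p < q < m < l`: at entries with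
`b r = p`, `b s = l`, `f (A*B) r s = (f A * B) r s`. -/
lemma rprop {f : Matrix (Fin n) (Fin n) F →ₗ[F] Matrix (Fin n) (Fin n) F}
    (hf : IsDerN b f) {p q m l : ℕ} (hpq : p < q) (hqm : q < m) (hml : m < l)
    {A B : Matrix (Fin n) (Fin n) F} (hA : InBlk b q m A) (hB : InBlk b m l B)
    (r s : Fin n) (hr : b r = p) (hs : b s = l) :
    f (A * B) r s = (f A * B) r s := by
  have hBA : B * A = 0 := blk_mul_blk_eq_zero (by omega) hB hA
  have h0 := hf.2 A B (inN_of_inBlk hqm hA) (inN_of_inBlk hml hB)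
  rw [hBA, sub_zero] at h0
  have h1 := congrFun (congrFun h0 r) s
  simp only [Matrix.add_apply, Matrix.sub_apply] at h1
  have h2 : (B * f A) r s = 0 := by
    rw [Matrix.mul_apply]
    apply Finset.sum_eq_zero
    intro w _
    rw [hB r w (by rintro ⟨h', _⟩; omega), zero_mul]
  have h3 : (A * f B) r s = 0 := by
    rw [Matrix.mul_apply]
    apply Finset.sum_eq_zero
    intro w _
    rw [hA r w (by rintro ⟨h', _⟩; omega), zero_mul]
  have h4 : (f B * A) r s = 0 := by
    rw [Matrix.mul_apply]
    apply Finset.sum_eq_zero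
    intro w _
    rw [hA w s (by rintro ⟨_, h'⟩; omega), mul_zero]
  rw [h2, h3, h4] at h1
  linear_combination h1

/-- Left propagation: `B ∈ N^{im}`, `A ∈ N^{mp}`, `i < m < p < q`: at entries with
`b r = i`, `b s = q`, `f (B*A) r s = (B * f A) r s`. -/
lemma lprop {f : Matrix (Fin n) (Fin n) F →ₗ[F] Matrix (Fin n) (Fin n) F}
    (hf : IsDerN b f) {i m p q : ℕ} (him : i < m) (hmp : m < p) (hpq : p < q)
    {B A : Matrix (Fin n) (Fin n) F} (hB : InBlk b i m B) (hA : InBlk b m p A)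
    (r s : Fin n) (hr : b r = i) (hs : b s = q) :
    f (B * A) r s = (B * f A) r s := by
  have hAB : A * B = 0 := blk_mul_blk_eq_zero (by omega) hA hB
  have h0 := hf.2 B A (inN_of_inBlk him hB) (inN_of_inBlk hmp hA)
  rw [hAB, sub_zero] at h0
  have h1 := congrFun (congrFun h0 r) s
  simp only [Matrix.add_apply, Matrix.sub_apply] at h1
  have h2 : (f B * A) r s = 0 := by
    rw [Matrix.mul_apply]
    apply Finset.sum_eq_zero
    intro w _
    rw [hA w s (by rintro ⟨_, h'⟩; omega), mul_zero]
  have h3 : (A * f B) r s = 0 := by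
    rw [Matrix.mul_apply]
    apply Finset.sum_eq_zero
    intro w _
    rw [hA r w (by rintro ⟨h', _⟩; omega), zero_mul]
  have h4 : (f A * B) r s = 0 := by
    rw [Matrix.mul_apply]
    apply Finset.sum_eq_zero
    intro w _
    rw [hB w s (by rintro ⟨_, h'⟩; omega), mul_zero]
  rw [h2, h3, h4] at h1
  linear_combination h1

/-- Bracket-zero identity. -/
lemma zbracket {f : Matrix (Fin n) (Fin n) F →ₗ[F] Matrix (Fin n) (Fin n) F}
    (hf : IsDerN b f) {X Z : Matrix (Fin n) (Fin n) F} (hX : InN b X) (hZ : InN b Z)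
    (hXZ : X * Z = 0) (hZX : Z * X = 0) :
    (0 : Matrix (Fin n) (Fin n) F) = f X * Z - Z * f X + (X * f Z - f Z * X) := by
  have h0 := hf.2 X Z hX hZ
  rw [hXZ, hZX, sub_zero, map_zero] at h0
  exact h0

/-- Entries of `f C` as a sum over elementary matrices. -/
lemma f_entry_sum {f : Matrix (Fin n) (Fin n) F →ₗ[F] Matrix (Fin n) (Fin n) F}
    (C : Matrix (Fin n) (Fin n) F) (r s : Fin n) :
    f C r s = ∑ u, ∑ v, C u v * f (Matrix.single u v (1:F)) r s := by
  conv_lhs => rw [Matrix.matrix_eq_sum_single C]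
  rw [map_sum, Matrix.sum_apply]
  refine Finset.sum_congr rfl fun u _ => ?_
  rw [map_sum, Matrix.sum_apply]
  refine Finset.sum_congr rfl fun v _ => ?_
  have h : Matrix.single u v (C u v) = C u v • Matrix.single u v (1:F) := by
    rw [Matrix.smul_single, smul_eq_mul, mul_one]
  rw [h, _root_.map_smul, Matrix.smul_apply, smul_eq_mul]

end Aux
/-- for a derivation `f` of `N` and `(p,q)` with `1 ≤ p < q ≤ t` and
`(p,q) ∉ {(1,t-1), (1,t), (2,t)}`, there is `Y ∈ N^{pq}` with
`f(A)_{iq} = -(A·Y)_{iq}` for `A ∈ N^{ip}`, `i < p`, and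
`f(A)_{pj} = (Y·A)_{pj}` for `A ∈ N^{qj}`, `j > q`. -/
theorem stmt13 {F : Type*} [Field F] {n t : ℕ} (b : Fin n → ℕ)
    (hn : 1 ≤ n) (ht : 3 ≤ t) (hmono : Monotone b)
    (hlb : ∀ r, 1 ≤ b r) (hub : ∀ r, b r ≤ t)
    (hsurj : ∀ k, 1 ≤ k → k ≤ t → ∃ r, b r = k)
    (f : Matrix (Fin n) (Fin n) F →ₗ[F] Matrix (Fin n) (Fin n) F)
    (hf : IsDerN b f)
    (p q : ℕ) (hp : 1 ≤ p) (hpq : p < q) (hq : q ≤ t)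
    (h1 : ¬(p = 1 ∧ q = t - 1)) (h2 : ¬(p = 1 ∧ q = t)) (h3 : ¬(p = 2 ∧ q = t)) :
    ∃ Y : Matrix (Fin n) (Fin n) F, InBlk b p q Y ∧
      (∀ i, 1 ≤ i → i < p → ∀ A, InBlk b i p A →
        ∀ r s, b r = i → b s = q → f A r s = -((A * Y) r s)) ∧
      (∀ j, q < j → j ≤ t → ∀ A, InBlk b q j A →
        ∀ r s, b r = p → b s = j → f A r s = (Y * A) r s) := by
  classical
  by_cases hp1 : p = 1
  · subst hp1
    have hq2 : q + 2 ≤ t := by omega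
    obtain ⟨v0, hv0⟩ := hsurj (q + 1) (by omega) (by omega)
    obtain ⟨w0, hw0⟩ := hsurj (q + 2) (by omega) (by omega)
    set Y : Matrix (Fin n) (Fin n) F :=
      Matrix.of fun r u => if b r = 1 ∧ b u = q then
        f (Matrix.single u v0 (1:F)) r v0 else 0 with hYdef
    have hYblk : InBlk b 1 q Y := by
      intro r s h
      simp only [hYdef, Matrix.of_apply, if_neg h]
    have hYval : ∀ r u, b r = 1 → b u = q →
        Y r u = f (Matrix.single u v0 (1:F)) r v0 := by
      intro r u hr hu
      simp only [hYdef, Matrix.of_apply, if_pos (And.intro hr hu)]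
    have hkey : ∀ (u v r s : Fin n), b u = q → q < b v → b r = 1 → b s = b v →
        f (Matrix.single u v (1:F)) r s =
          if s = v then f (Matrix.single u v0 (1:F)) r v0 else 0 := by
      intro u v r s hu hv hr hs
      by_cases hbv : b v = q + 1
      · by_cases hsv : s = v
        · subst hsv
          rw [if_pos rfl]
          have e1 : Matrix.single u s (1:F) * Matrix.single s w0 (1:F) =
              Matrix.single u w0 (1:F) := by
            rw [Matrix.single_mul_single_same, one_mul]
          have e2 : Matrix.single u v0 (1:F) * Matrix.single v0 w0 (1:F) =
              Matrix.single u w0 (1:F) := by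
            rw [Matrix.single_mul_single_same, one_mul]
          have p1 := rprop hf hpq (Nat.lt_succ_self q) (by omega : q + 1 < q + 2)
            (stdBasis_inBlk hu (hs.trans hbv)) (stdBasis_inBlk (hs.trans hbv) hw0)
            r w0 hr hw0
          have p2 := rprop hf hpq (Nat.lt_succ_self q) (by omega : q + 1 < q + 2)
            (stdBasis_inBlk hu hv0) (stdBasis_inBlk hv0 hw0) r w0 hr hw0
          rw [e1, Matrix.mul_single_apply_same, mul_one] at p1
          rw [e2, Matrix.mul_single_apply_same, mul_one] at p2
          rw [← p1, ← p2]
        · rw [if_neg hsv]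
          have hbs : b s = q + 1 := hs.trans hbv
          have hXZ : Matrix.single u v (1:F) * Matrix.single s w0 (1:F) = 0 :=
            Matrix.single_mul_single_of_ne (1:F) u v _ (fun h => hsv h.symm) 1
          have hZX : Matrix.single s w0 (1:F) * Matrix.single u v (1:F) = 0 :=
            Matrix.single_mul_single_of_ne (1:F) s w0 _ (by intro h; rw [h] at hw0; omega) 1
          have h0 := zbracket hf
            (inN_of_inBlk (show q < q + 1 by omega) (stdBasis_inBlk hu hbv))
            (inN_of_inBlk (show q + 1 < q + 2 by omega) (stdBasis_inBlk hbs hw0))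
            hXZ hZX
          have h1 := congrFun (congrFun h0.symm r) w0
          simp only [Matrix.add_apply, Matrix.sub_apply, Matrix.zero_apply] at h1
          rw [Matrix.mul_single_apply_same, mul_one,
            Matrix.single_mul_apply_of_ne (h := by intro h; rw [h] at hr; omega),
            Matrix.single_mul_apply_of_ne (h := by intro h; rw [h] at hr; omega),
            Matrix.mul_single_apply_of_ne (hbj := by intro h; rw [h] at hw0; omega)]
            at h1
          linear_combination h1
      · have hbv2 : q + 1 < b v := by omega
        have e : Matrix.single u v0 (1:F) * Matrix.single v0 v (1:F) =
            Matrix.single u v (1:F) := by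
          rw [Matrix.single_mul_single_same, one_mul]
        have p1 := rprop hf hpq (Nat.lt_succ_self q) hbv2
          (stdBasis_inBlk hu hv0) (stdBasis_inBlk hv0 rfl) r s hr hs
        rw [e] at p1
        by_cases hsv : s = v
        · subst hsv
          rw [if_pos rfl, p1, Matrix.mul_single_apply_same, mul_one]
        · rw [if_neg hsv, p1, Matrix.mul_single_apply_of_ne (hbj := hsv)]
    refine ⟨Y, hYblk, ?_, ?_⟩
    · intro i hi1 hip A hA r s hr hs
      exact absurd hip (by omega)
    · intro j hqj hjt C hC r s hr hs
      rw [f_entry_sum C r s, Matrix.mul_apply]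
      refine Finset.sum_congr rfl fun u _ => ?_
      by_cases hu : b u = q
      · rw [Finset.sum_eq_single s]
        · rw [hkey u s r s hu (by omega) hr rfl, if_pos rfl, ← hYval r u hr hu, mul_comm]
        · intro v _ hvs
          by_cases hbv : b v = j
          · rw [hkey u v r s hu (by omega) hr (hs.trans hbv.symm), if_neg (fun h => hvs h.symm), mul_zero]
          · rw [hC u v (fun h => hbv h.2), zero_mul]
        · intro h
          exact absurd (Finset.mem_univ s) h
      · rw [hYblk r u (fun h => hu h.2), zero_mul]
        apply Finset.sum_eq_zero
        intro v _
        rw [hC u v (fun h => hu h.1), zero_mul]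
  · by_cases hqt : q = t
    · subst hqt
      have hp3 : 3 ≤ p := by omega
      obtain ⟨r0, hr0⟩ := hsurj (p - 1) (by omega) (by omega)
      obtain ⟨r00, hr00⟩ := hsurj (p - 2) (by omega) (by omega)
      set Y : Matrix (Fin n) (Fin n) F :=
        Matrix.of fun u s => if b u = p ∧ b s = q then
          -(f (Matrix.single r0 u (1:F)) r0 s) else 0 with hYdef
      have hYblk : InBlk b p q Y := by
        intro r s h
        simp only [hYdef, Matrix.of_apply, if_neg h]
      have hYval : ∀ u s, b u = p → b s = q →
          Y u s = -(f (Matrix.single r0 u (1:F)) r0 s) := by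
        intro u s hu hs
        simp only [hYdef, Matrix.of_apply, if_pos (And.intro hu hs)]
      have hkey : ∀ (w u r s : Fin n), b u = p → b w < p → b r = b w → b s = q →
          f (Matrix.single w u (1:F)) r s =
            if r = w then f (Matrix.single r0 u (1:F)) r0 s else 0 := by
        intro w u r s hu hw hr hs
        by_cases hbw : b w = p - 1
        · by_cases hrw : r = w
          · subst hrw
            rw [if_pos rfl]
            have e1 : Matrix.single r00 r (1:F) * Matrix.single r u (1:F) =
                Matrix.single r00 u (1:F) := by
              rw [Matrix.single_mul_single_same, one_mul]
            have e2 : Matrix.single r00 r0 (1:F) * Matrix.single r0 u (1:F) =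
                Matrix.single r00 u (1:F) := by
              rw [Matrix.single_mul_single_same, one_mul]
            have hbr : b r = p - 1 := hr.trans hbw
            have p1 := lprop hf (show p - 2 < p - 1 by omega) (show p - 1 < p by omega) hpq
              (stdBasis_inBlk hr00 hbr) (stdBasis_inBlk hbr hu) r00 s hr00 hs
            have p2 := lprop hf (show p - 2 < p - 1 by omega) (show p - 1 < p by omega) hpq
              (stdBasis_inBlk hr00 hr0) (stdBasis_inBlk hr0 hu) r00 s hr00 hs
            rw [e1, Matrix.single_mul_apply_same, one_mul] at p1
            rw [e2, Matrix.single_mul_apply_same, one_mul] at p2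
            rw [← p1, ← p2]
          · rw [if_neg hrw]
            have hbr : b r = p - 1 := hr.trans hbw
            have hXZ : Matrix.single w u (1:F) * Matrix.single r00 r (1:F) = 0 :=
              Matrix.single_mul_single_of_ne (1:F) w u _
                (by intro h; rw [h] at hu; omega) 1
            have hZX : Matrix.single r00 r (1:F) * Matrix.single w u (1:F) = 0 :=
              Matrix.single_mul_single_of_ne (1:F) r00 r _ (fun h => hrw h) 1
            have h0 := zbracket hf
              (inN_of_inBlk (show p - 1 < p by omega) (stdBasis_inBlk hbw hu))
              (inN_of_inBlk (show p - 2 < p - 1 by omega) (stdBasis_inBlk hr00 hbr))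
              hXZ hZX
            have h1 := congrFun (congrFun h0.symm r00) s
            simp only [Matrix.add_apply, Matrix.sub_apply, Matrix.zero_apply] at h1
            rw [Matrix.single_mul_apply_same, one_mul,
              Matrix.mul_single_apply_of_ne
                (hbj := by intro h; rw [h] at hs; omega),
              Matrix.single_mul_apply_of_ne
                (h := by intro h; rw [h] at hr00; omega),
              Matrix.mul_single_apply_of_ne
                (hbj := by intro h; rw [h] at hs; omega)] at h1
            linear_combination -h1
        · have hbw2 : b w < p - 1 := by omega
          have e : Matrix.single w r0 (1:F) * Matrix.single r0 u (1:F) =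
              Matrix.single w u (1:F) := by
            rw [Matrix.single_mul_single_same, one_mul]
          have p1 := lprop hf hbw2 (show p - 1 < p by omega) hpq
            (stdBasis_inBlk rfl hr0) (stdBasis_inBlk hr0 hu) r s hr hs
          rw [e] at p1
          by_cases hrw : r = w
          · subst hrw
            rw [if_pos rfl, p1, Matrix.single_mul_apply_same, one_mul]
          · rw [if_neg hrw, p1, Matrix.single_mul_apply_of_ne (h := hrw)]
      refine ⟨Y, hYblk, ?_, ?_⟩
      · intro i hi1 hip A hA r s hr hs
        rw [f_entry_sum A r s, Matrix.mul_apply, ← Finset.sum_neg_distrib]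
        rw [Finset.sum_eq_single r]
        · refine Finset.sum_congr rfl fun u _ => ?_
          by_cases hu : b u = p
          · rw [hkey r u r s hu (by omega) rfl hs, if_pos rfl, hYval u s hu hs]
            ring
          · rw [hA r u (fun h => hu h.2), zero_mul, zero_mul, neg_zero]
        · intro w _ hwr
          apply Finset.sum_eq_zero
          intro u _
          by_cases hbw : b w = i
          · by_cases hu : b u = p
            · rw [hkey w u r s hu (by omega) (hr.trans hbw.symm) hs,
                if_neg (fun h => hwr h.symm), mul_zero]
            · rw [hA w u (fun h => hu h.2), zero_mul]
          · rw [hA w u (fun h => hbw h.1), zero_mul]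
        · intro h
          exact absurd (Finset.mem_univ r) h
      · intro j hqj hjt A hA r s hr hs
        exact absurd hjt (by omega)
    · -- main case : 2 ≤ p and q < t
      have hp2 : 2 ≤ p := by omega
      have hqt' : q < t := by omega
      obtain ⟨v0, hv0⟩ := hsurj (q + 1) (by omega) (by omega)
      obtain ⟨r1, hr1⟩ := hsurj 1 (by omega) (by omega)
      set Y : Matrix (Fin n) (Fin n) F :=
        Matrix.of fun u w => if b u = p ∧ b w = q then
          f (Matrix.single w v0 (1:F)) u v0 else 0 with hYdef
      have hYblk : InBlk b p q Y := by
        intro r s h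
        simp only [hYdef, Matrix.of_apply, if_neg h]
      have hYval : ∀ u w, b u = p → b w = q →
          Y u w = f (Matrix.single w v0 (1:F)) u v0 := by
        intro u w hu hw
        simp only [hYdef, Matrix.of_apply, if_pos (And.intro hu hw)]
      refine ⟨Y, hYblk, ?_, ?_⟩
      · -- condition (a)
        intro i hi1 hip A hA r s hr hs
        have hc := cross hf hip hpq (Nat.lt_succ_self q) hA
          (stdBasis_inBlk hs hv0) r v0 hr hv0
        rw [Matrix.mul_single_apply_same, mul_one] at hc
        have h5 : (A * f (Matrix.single s v0 (1:F))) r v0 = (A * Y) r s := by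
          rw [Matrix.mul_apply, Matrix.mul_apply]
          refine Finset.sum_congr rfl fun u _ => ?_
          by_cases hu : b u = p
          · rw [hYval u s hu hs]
          · rw [hA r u (fun h => hu h.2), zero_mul, zero_mul]
        linear_combination hc - h5
      · -- condition (b)
        intro j hqj hjt C hC r s hr hs
        have hkey : ∀ w, b w = q →
            f (Matrix.single r1 r (1:F)) r1 w = -(Y r w) := by
          intro w hw
          have hc := cross hf (show (1:ℕ) < p by omega) hpq (Nat.lt_succ_self q)
            (stdBasis_inBlk hr1 hr) (stdBasis_inBlk hw hv0) r1 v0 hr1 hv0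
          rw [Matrix.mul_single_apply_same,
            Matrix.single_mul_apply_same, mul_one, one_mul,
            ← hYval r w hr hw] at hc
          linear_combination hc
        have hc2 := cross hf (show (1:ℕ) < p by omega) hpq hqj
          (stdBasis_inBlk hr1 hr) hC r1 s hr1 hs
        rw [Matrix.single_mul_apply_same, one_mul] at hc2
        have h6 : (f (Matrix.single r1 r (1:F)) * C) r1 s = -((Y * C) r s) := by
          rw [Matrix.mul_apply, Matrix.mul_apply, ← Finset.sum_neg_distrib]
          refine Finset.sum_congr rfl fun w _ => ?_
          by_cases hw : b w = q
          · rw [hkey w hw, neg_mul]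
          · rw [hC w s (fun h => hw h.1), mul_zero, hYblk r w (fun h => hw h.2),
              zero_mul, neg_zero]
        rw [h6] at hc2
        linear_combination hc2
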